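/- Let L > 0, T > 0 and u⁻ < 0 < u⁺ be real numbers. Let α : ℝ → ℝ satisfy α(0) = 0, α(x) ≥ 0 for all x ≥ 0, and |α(x) - α(y)| ≤ L·|x - y| for all x, y ≥ 0 (α is L-Lipschitz on the nonnegative reals). Let u : ℝ → ℝ satisfy u(t) ∈ [u⁻, u⁺] for all t ∈ [0, T], and let μ : ℝ → ℝ be differentiable on [0, T] with μ(t) ≥ 0 and μ'(t) = α(μ(t))·u(t) for all t ∈ [0, T]. If μ(0) > 0, then for every t ∈ [0, T] one has μ(t) ≥ μ(0)·exp(L·u⁻·t), and in particular μ(t) > 0. -/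

import Mathlib

theorem stmt_0 (L T um up : ℝ) (hL : 0 < L) (hT : 0 < T) (hum : um < 0) (hup : 0 < up)
    (α u μ : ℝ → ℝ)
    (hα0 : α 0 = 0)
    (hαnonneg : ∀ x, 0 ≤ x → 0 ≤ α x)
    (hαlip : ∀ x y, 0 ≤ x → 0 ≤ y → |α x - α y| ≤ L * |x - y|)
    (hu : ∀ t ∈ Set.Icc (0 : ℝ) T, u t ∈ Set.Icc um up)
    (hμpos : ∀ t ∈ Set.Icc (0 : ℝ) T, 0 ≤ μ t)
    (hμderiv : ∀ t ∈ Set.Icc (0 : ℝ) T, HasDerivAt μ (α (μ t) * u t) t)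
    (h0 : 0 < μ 0) :
    ∀ t ∈ Set.Icc (0 : ℝ) T, μ 0 * Real.exp (L * um * t) ≤ μ t ∧ 0 < μ t := by
  set g : ℝ → ℝ := fun t => μ t * Real.exp (-(L * um) * t) with hg
  have hαle : ∀ x, 0 ≤ x → α x ≤ L * x := by
    intro x hx
    have := hαlip x 0 hx le_rfl
    simp only [hα0, sub_zero, abs_of_nonneg hx] at this
    exact (le_abs_self _).trans this
  have hgd : ∀ t ∈ Set.Icc (0 : ℝ) T,
      HasDerivAt g ((α (μ t) * u t - L * um * μ t) * Real.exp (-(L * um) * t)) t := by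
    intro t ht
    have he : HasDerivAt (fun s => Real.exp (-(L * um) * s))
        (-(L * um) * Real.exp (-(L * um) * t)) t := by
      simpa [mul_comm] using ((hasDerivAt_id t).const_mul (-(L * um))).exp
    have : HasDerivAt (fun s => μ s * Real.exp (-(L * um) * s)) _ t := (hμderiv t ht).mul he
    convert this using 1
    ring
  have hderiv_nonneg : ∀ t ∈ Set.Icc (0 : ℝ) T,
      0 ≤ (α (μ t) * u t - L * um * μ t) * Real.exp (-(L * um) * t) := by
    intro t ht
    apply mul_nonneg _ (Real.exp_pos _).le
    have hμt := hμpos t ht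
    have hαμ : 0 ≤ α (μ t) := hαnonneg _ hμt
    have h1 : α (μ t) * um ≤ α (μ t) * u t :=
      mul_le_mul_of_nonneg_left (hu t ht).1 hαμ
    have h2 : L * μ t * um ≤ α (μ t) * um :=
      mul_le_mul_of_nonpos_right (hαle _ hμt) hum.le
    nlinarith
  have hcont : ContinuousOn g (Set.Icc 0 T) := fun t ht =>
    (hgd t ht).continuousAt.continuousWithinAt
  have hmono : MonotoneOn g (Set.Icc 0 T) := by
    apply monotoneOn_of_deriv_nonneg (convex_Icc 0 T) hcont
    · intro x hx
      rw [interior_Icc] at hx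
      exact (hgd x (Set.mem_Icc_of_Ioo hx)).differentiableAt.differentiableWithinAt
    · intro x hx
      rw [interior_Icc] at hx
      rw [(hgd x (Set.mem_Icc_of_Ioo hx)).deriv]
      exact hderiv_nonneg x (Set.mem_Icc_of_Ioo hx)
  intro t ht
  have h0mem : (0 : ℝ) ∈ Set.Icc (0 : ℝ) T := ⟨le_rfl, hT.le⟩
  have hle : g 0 ≤ g t := hmono h0mem ht ht.1
  have hg0 : g 0 = μ 0 := by simp [hg]
  have hmain : μ 0 * Real.exp (L * um * t) ≤ μ t := by
    have hexp : (0 : ℝ) < Real.exp (L * um * t) := Real.exp_pos _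
    rw [hg0] at hle
    have := mul_le_mul_of_nonneg_right hle hexp.le
    calc μ 0 * Real.exp (L * um * t) ≤ μ t * Real.exp (-(L * um) * t) * Real.exp (L * um * t) :=
          this
      _ = μ t := by rw [mul_assoc, ← Real.exp_add]; ring_nf; simp
  exact ⟨hmain, lt_of_lt_of_le (by positivity) hmain⟩
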